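/- Let A be an m×n real matrix satisfying VSG_s(ξ,θ,ρ,σ) with ξ ∈ [0,1), θ ∈ [1,∞), ρ,σ ∈ [0,∞). Then A satisfies SG_{s,β}(ξ,θ) with β = ρ + σ · max{ k_+·(1+θξ) + k_n·(1+ξ) : 0 ≤ k_+ ≤ Card(P_+), 0 ≤ k_n ≤ Card(P_n), k_+ + k_n ≤ s }, and this β satisfies β ≤ ρ + σ·s·(1+θξ). In particular, A is s-semigood. -/

import Mathlib

open Finset

noncomputable def normS1 {n : ℕ} (s : ℕ) (x : Fin n → ℝ) : ℝ :=
  (Finset.univ.powerset.filter (fun J : Finset (Fin n) => J.card ≤ s)).sup'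
    ⟨∅, by simp⟩ (fun J => ∑ i ∈ J, |x i|)

noncomputable def dualNorm {m : ℕ} (N : (Fin m → ℝ) → ℝ) (v : Fin m → ℝ) : ℝ :=
  sSup {r : ℝ | ∃ x : Fin m → ℝ, N x ≤ 1 ∧ r = ∑ k, v k * x k}

def IsNorm {m : ℕ} (N : (Fin m → ℝ) → ℝ) : Prop :=
  (∀ x y, N (x + y) ≤ N x + N y) ∧ (∀ (c : ℝ) (x), N (c • x) = |c| * N x) ∧
  (∀ x, N x = 0 → x = 0)

def SemiGood {m n : ℕ} (A : Matrix (Fin m) (Fin n) ℝ) (Pplus : Finset (Fin n)) (s : ℕ) : Prop :=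
  ∀ w : Fin n → ℝ,
    (Finset.univ.filter (fun i => w i ≠ 0)).card ≤ s →
    (∀ i ∈ Pplus, 0 ≤ w i) →
    ∀ z : Fin n → ℝ, A.mulVec z = A.mulVec w → (∀ i ∈ Pplus, 0 ≤ z i) →
      (∑ i, |z i|) ≤ (∑ i, |w i|) → z = w

def SGCond {m n : ℕ} (A : Matrix (Fin m) (Fin n) ℝ) (Pplus : Finset (Fin n))
    (s : ℕ) (ξ θ : ℝ) : Prop :=
  ∀ x : Fin n → ℝ, A.mulVec x = 0 → ∀ J : Finset (Fin n), J.card ≤ s →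
    ∑ i ∈ J ∩ Pplus, x i + ∑ i ∈ J ∩ Pplusᶜ, |x i| ≤
      ξ * (∑ i ∈ Pplusᶜ \ J, |x i| + ∑ i ∈ Pplus \ J, max (-x i) (θ * x i))

def SGbCond {m n : ℕ} (A : Matrix (Fin m) (Fin n) ℝ) (Pplus : Finset (Fin n))
    (s : ℕ) (ξ θ β : ℝ) (N : (Fin m → ℝ) → ℝ) : Prop :=
  ∀ x : Fin n → ℝ, ∀ J : Finset (Fin n), J.card ≤ s →
    ∑ i ∈ J ∩ Pplus, x i + ∑ i ∈ J ∩ Pplusᶜ, |x i| ≤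
      β * N (A.mulVec x) +
        ξ * (∑ i ∈ Pplusᶜ \ J, |x i| + ∑ i ∈ Pplus \ J, max (-x i) (θ * x i))

def SGbCondSign {m n : ℕ} (A : Matrix (Fin m) (Fin n) ℝ) (Pplus : Finset (Fin n))
    (s : ℕ) (ξ β : ℝ) (N : (Fin m → ℝ) → ℝ) : Prop :=
  ∀ J : Finset (Fin n), J.card ≤ s →
    ∀ x : Fin n → ℝ, (∀ i ∈ Pplus \ J, x i ≤ 0) →
      ∑ i ∈ J ∩ Pplus, x i + ∑ i ∈ J ∩ Pplusᶜ, |x i| ≤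
        β * N (A.mulVec x) + ξ * ∑ i ∈ Jᶜ, |x i|

noncomputable def Phi {n : ℕ} (Pplus : Finset (Fin n)) (s : ℕ) (ξ θ : ℝ)
    (x : Fin n → ℝ) : ℝ :=
  normS1 s (fun i => if i ∈ Pplus then (1 + θ * ξ) * max (x i) 0 else (1 + ξ) * |x i|)

def VSGCert {m n : ℕ} (A : Matrix (Fin m) (Fin n) ℝ) (Pplus : Finset (Fin n))
    (s : ℕ) (ξ θ ρ σ : ℝ) (N : (Fin m → ℝ) → ℝ)
    (Y : Matrix (Fin m) (Fin n) ℝ) (v : Fin m → ℝ) : Prop :=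
  (∀ i, Phi Pplus s ξ θ (fun j => -((1 - Y.transpose * A : Matrix (Fin n) (Fin n) ℝ) j i)) + (A.transpose.mulVec v) i ≤ ξ) ∧
  (∀ i ∉ Pplus, Phi Pplus s ξ θ (fun j => (1 - Y.transpose * A : Matrix (Fin n) (Fin n) ℝ) j i) - (A.transpose.mulVec v) i ≤ ξ) ∧
  (∀ i ∈ Pplus, Phi Pplus s ξ θ (fun j => (1 - Y.transpose * A : Matrix (Fin n) (Fin n) ℝ) j i) - (A.transpose.mulVec v) i ≤ θ * ξ) ∧
  (∀ i, dualNorm N (fun k => Y k i) ≤ σ) ∧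
  dualNorm N v ≤ ρ

def VSG {m n : ℕ} (A : Matrix (Fin m) (Fin n) ℝ) (Pplus : Finset (Fin n))
    (s : ℕ) (ξ θ ρ σ : ℝ) (N : (Fin m → ℝ) → ℝ) : Prop :=
  ∃ (Y : Matrix (Fin m) (Fin n) ℝ) (v : Fin m → ℝ), VSGCert A Pplus s ξ θ ρ σ N Y v

def VSGbarCert {m n : ℕ} (A : Matrix (Fin m) (Fin n) ℝ) (Pplus : Finset (Fin n))
    (s : ℕ) (ξ σ θ : ℝ) (N : (Fin m → ℝ) → ℝ) (Y : Matrix (Fin m) (Fin n) ℝ) : Prop :=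
  (∀ i, dualNorm N (fun k => Y k i) ≤ σ) ∧
  (∀ i ∉ Pplus, ∀ j, |(1 - Y.transpose * A : Matrix (Fin n) (Fin n) ℝ) i j| ≤ ξ / ((1 + ξ) * s)) ∧
  (∀ i ∈ Pplus, ∀ j ∉ Pplus,
    -(ξ / ((1 + ξ * θ) * s)) ≤ (1 - Y.transpose * A : Matrix (Fin n) (Fin n) ℝ) i j ∧
      (1 - Y.transpose * A : Matrix (Fin n) (Fin n) ℝ) i j ≤ ξ / ((1 + ξ * θ) * s)) ∧
  (∀ i ∈ Pplus, ∀ j ∈ Pplus,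
    -(ξ / ((1 + ξ * θ) * s)) ≤ (1 - Y.transpose * A : Matrix (Fin n) (Fin n) ℝ) i j ∧
      (1 - Y.transpose * A : Matrix (Fin n) (Fin n) ℝ) i j ≤ ξ * θ / ((1 + ξ * θ) * s))


section NormLemmas
variable {m : ℕ} {N : (Fin m → ℝ) → ℝ}

lemma isnormZero (hN : IsNorm N) : N 0 = 0 := by
  have := hN.2.1 0 0
  simpa using this

lemma isnormNeg (hN : IsNorm N) (x : Fin m → ℝ) : N (-x) = N x := by
  have := hN.2.1 (-1) x
  simpa using this

lemma isnormNonneg (hN : IsNorm N) (x : Fin m → ℝ) : 0 ≤ N x := by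
  have h1 := hN.1 x (-x)
  have h2 : N (-x) = N x := isnormNeg hN x
  have h0 : N 0 = 0 := isnormZero hN
  rw [add_neg_cancel, h0] at h1
  linarith

lemma norm_le_C (hN : IsNorm N) :
    ∃ C : ℝ, 0 ≤ C ∧ ∀ x : Fin m → ℝ, N x ≤ C * ‖x‖ := by
  refine ⟨∑ i, N (fun j => if i = j then 1 else 0), Finset.sum_nonneg fun i _ => isnormNonneg hN _, fun x => ?_⟩
  calc N x = N (∑ i, x i • fun j => if i = j then (1:ℝ) else 0) := by rw [← pi_eq_sum_univ x]
    _ ≤ ∑ i, N (x i • fun j => if i = j then (1:ℝ) else 0) :=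
        Finset.le_sum_of_subadditive N (isnormZero hN).le hN.1 _ _
    _ = ∑ i, |x i| * N (fun j => if i = j then (1:ℝ) else 0) := by
        simp [hN.2.1]
    _ ≤ ∑ i, ‖x‖ * N (fun j => if i = j then (1:ℝ) else 0) := by
        refine Finset.sum_le_sum fun i _ => ?_
        exact mul_le_mul_of_nonneg_right (by simpa using norm_le_pi_norm x i) (isnormNonneg hN _)
    _ = (∑ i, N (fun j => if i = j then (1:ℝ) else 0)) * ‖x‖ := by
        rw [Finset.sum_mul]; exact Finset.sum_congr rfl fun i _ => mul_comm _ _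

lemma norm_continuous (hN : IsNorm N) : Continuous N := by
  obtain ⟨C, hC0, hC⟩ := norm_le_C hN
  have key : ∀ x y : Fin m → ℝ, N x - N y ≤ C * ‖x - y‖ := by
    intro x y
    have h1 := hN.1 (x - y) y
    simp only [sub_add_cancel] at h1
    have := hC (x - y)
    linarith
  rw [Metric.continuous_iff]
  intro x ε hε
  by_cases hC' : C = 0
  · exact ⟨1, one_pos, fun y _ => by
      have h1 := key y x; have h2 := key x y
      rw [hC'] at h1 h2
      simp only [Real.dist_eq]
      rw [abs_lt]; constructor <;> nlinarith⟩
  · have hCpos : 0 < C := lt_of_le_of_ne hC0 (Ne.symm hC')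
    refine ⟨ε / C, by positivity, fun y hy => ?_⟩
    have h1 := key y x
    have h2 := key x y
    have hd : ‖y - x‖ < ε / C := by rwa [dist_eq_norm] at hy
    have hd2 : ‖x - y‖ < ε / C := by rwa [← norm_sub_rev]
    simp only [Real.dist_eq]
    rw [abs_lt]
    have hcc : C * (ε / C) = ε := by field_simp
    constructor <;> nlinarith [mul_lt_mul_of_pos_left hd hCpos, mul_lt_mul_of_pos_left hd2 hCpos]

lemma norm_lower (hN : IsNorm N) : ∃ c : ℝ, 0 < c ∧ ∀ x : Fin m → ℝ, c * ‖x‖ ≤ N x := by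
  rcases Nat.eq_zero_or_pos m with hm | hm
  · refine ⟨1, one_pos, fun x => ?_⟩
    have hx : x = 0 := by subst hm; funext i; exact absurd i.2 (by omega)
    simp [hx, isnormZero hN]
  · haveI : Nonempty (Fin m) := ⟨⟨0, hm⟩⟩
    have hne : (Metric.sphere (0 : Fin m → ℝ) 1).Nonempty :=
      NormedSpace.sphere_nonempty.mpr zero_le_one
    obtain ⟨x₀, hx₀S, hx₀min⟩ := (isCompact_sphere (0 : Fin m → ℝ) 1).exists_isMinOn hne
      (norm_continuous hN).continuousOn
    have hx₀norm : ‖x₀‖ = 1 := by simpa using hx₀S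
    have hx₀ne : x₀ ≠ 0 := by intro h; rw [h] at hx₀norm; simp at hx₀norm
    have hc : 0 < N x₀ := by
      rcases lt_or_eq_of_le (isnormNonneg hN x₀) with h | h
      · exact h
      · exact absurd (hN.2.2 x₀ h.symm) hx₀ne
    refine ⟨N x₀, hc, fun x => ?_⟩
    by_cases hx : x = 0
    · simp [hx, isnormZero hN]
    · have hxn : (0:ℝ) < ‖x‖ := norm_pos_iff.mpr hx
      have hmem : ‖x‖⁻¹ • x ∈ Metric.sphere (0 : Fin m → ℝ) 1 := by
        simp [norm_smul, abs_of_pos (inv_pos.mpr hxn), inv_mul_cancel₀ hxn.ne']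
      have h2 : N x₀ ≤ N (‖x‖⁻¹ • x) := hx₀min hmem
      rw [hN.2.1, abs_of_pos (inv_pos.mpr hxn)] at h2
      calc N x₀ * ‖x‖ ≤ (‖x‖⁻¹ * N x) * ‖x‖ := mul_le_mul_of_nonneg_right h2 hxn.le
        _ = N x := by field_simp

lemma dualNorm_bddAbove (hN : IsNorm N) (v : Fin m → ℝ) :
    BddAbove {r : ℝ | ∃ x : Fin m → ℝ, N x ≤ 1 ∧ r = ∑ k, v k * x k} := by
  obtain ⟨c, hc, hlow⟩ := norm_lower hN
  refine ⟨(∑ k, |v k|) * c⁻¹, fun r ⟨x, hx1, hr⟩ => ?_⟩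
  have hxn : ‖x‖ ≤ c⁻¹ := by
    have h1 : c * ‖x‖ ≤ 1 := (hlow x).trans hx1
    calc ‖x‖ = c⁻¹ * (c * ‖x‖) := by field_simp
      _ ≤ c⁻¹ * 1 := mul_le_mul_of_nonneg_left h1 (inv_nonneg.mpr hc.le)
      _ = c⁻¹ := mul_one _
  subst hr
  calc ∑ k, v k * x k ≤ ∑ k, |v k| * c⁻¹ := by
        refine Finset.sum_le_sum fun k _ => ?_
        calc v k * x k ≤ |v k * x k| := le_abs_self _
          _ = |v k| * |x k| := abs_mul _ _
          _ ≤ |v k| * c⁻¹ := mul_le_mul_of_nonneg_left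
              ((by simpa using norm_le_pi_norm x k : |x k| ≤ ‖x‖).trans hxn) (abs_nonneg _)
    _ = (∑ k, |v k|) * c⁻¹ := by rw [Finset.sum_mul]

lemma dualNorm_nonneg (hN : IsNorm N) (v : Fin m → ℝ) : 0 ≤ dualNorm N v := by
  apply le_csSup (dualNorm_bddAbove hN v)
  exact ⟨0, by simp [isnormZero hN], by simp⟩

lemma pairing_le (hN : IsNorm N) (u w : Fin m → ℝ) :
    ∑ k, u k * w k ≤ dualNorm N u * N w := by
  rcases eq_or_lt_of_le (isnormNonneg hN w) with h | h
  · have hw : w = 0 := hN.2.2 w h.symm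
    rw [hw]
    simp [isnormZero hN]
  · have hz : N ((N w)⁻¹ • w) ≤ 1 := by
      rw [hN.2.1, abs_of_pos (inv_pos.mpr h), inv_mul_cancel₀ h.ne']
    have hmem : (∑ k, u k * ((N w)⁻¹ * w k)) ∈
        {r : ℝ | ∃ x : Fin m → ℝ, N x ≤ 1 ∧ r = ∑ k, u k * x k} :=
      ⟨(N w)⁻¹ • w, hz, by simp [Pi.smul_apply, smul_eq_mul]⟩
    have hle := le_csSup (dualNorm_bddAbove hN u) hmem
    have h3 : (N w)⁻¹ * ∑ k, u k * w k ≤ dualNorm N u := by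
      rw [Finset.mul_sum] at *
      convert hle using 2 with k
      · rfl
      · ring
      · rfl
    calc ∑ k, u k * w k = N w * ((N w)⁻¹ * ∑ k, u k * w k) := by field_simp
      _ ≤ N w * dualNorm N u := mul_le_mul_of_nonneg_left h3 h.le
      _ = dualNorm N u * N w := mul_comm _ _

end NormLemmas

lemma eps_dot_le_phi {n : ℕ} (Pplus : Finset (Fin n)) (s : ℕ) (ξ θ : ℝ)
    (hξ0 : 0 ≤ ξ) (hθ : 1 ≤ θ) (J : Finset (Fin n)) (hJ : J.card ≤ s)
    (ε c : Fin n → ℝ)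
    (hsupp : ∀ i ∉ J, ε i = 0)
    (hP : ∀ i ∈ Pplus, 0 ≤ ε i ∧ ε i ≤ 1 + θ * ξ)
    (hPn : ∀ i ∉ Pplus, |ε i| ≤ 1 + ξ) :
    ∑ i, ε i * c i ≤ Phi Pplus s ξ θ c := by
  have hθξ : 0 ≤ θ * ξ := mul_nonneg (by linarith) hξ0
  set y : Fin n → ℝ := fun i => if i ∈ Pplus then (1 + θ * ξ) * max (c i) 0 else (1 + ξ) * |c i|
    with hy
  have hstep1 : ∑ i, ε i * c i = ∑ i ∈ J, ε i * c i :=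
    (Finset.sum_subset (Finset.subset_univ J) (fun i _ hi => by rw [hsupp i hi, zero_mul])).symm
  have hstep2 : ∑ i ∈ J, ε i * c i ≤ ∑ i ∈ J, |y i| := by
    refine Finset.sum_le_sum fun i _ => ?_
    by_cases hi : i ∈ Pplus
    · have h1 : ε i * c i ≤ ε i * max (c i) 0 :=
        mul_le_mul_of_nonneg_left (le_max_left _ _) (hP i hi).1
      have h2 : ε i * max (c i) 0 ≤ (1 + θ * ξ) * max (c i) 0 :=
        mul_le_mul_of_nonneg_right (hP i hi).2 (le_max_right _ _)
      have h3 : (0:ℝ) ≤ (1 + θ * ξ) * max (c i) 0 :=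
        mul_nonneg (by linarith) (le_max_right _ _)
      rw [hy]; simp only [hi, if_true]
      rw [abs_of_nonneg h3]; linarith
    · have h1 : ε i * c i ≤ |ε i| * |c i| := by
        calc ε i * c i ≤ |ε i * c i| := le_abs_self _
          _ = |ε i| * |c i| := abs_mul _ _
      have h2 : |ε i| * |c i| ≤ (1 + ξ) * |c i| :=
        mul_le_mul_of_nonneg_right (hPn i hi) (abs_nonneg _)
      have h3 : (0:ℝ) ≤ (1 + ξ) * |c i| := mul_nonneg (by linarith) (abs_nonneg _)
      rw [hy]; simp only [hi, if_false]
      rw [abs_of_nonneg h3]; linarith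
  have hstep3 : ∑ i ∈ J, |y i| ≤ Phi Pplus s ξ θ c := by
    have hmem : J ∈ (Finset.univ.powerset.filter (fun K : Finset (Fin n) => K.card ≤ s)) :=
      Finset.mem_filter.mpr ⟨Finset.mem_powerset.mpr (Finset.subset_univ J), hJ⟩
    exact Finset.le_sup' (fun K => ∑ i ∈ K, |y i|) hmem
  linarith

lemma main_sgb {m n : ℕ} (A : Matrix (Fin m) (Fin n) ℝ) (Pplus : Finset (Fin n))
    (s : ℕ) (ξ θ ρ σ Ψ : ℝ)
    (hξ0 : 0 ≤ ξ) (hξ1 : ξ < 1) (hθ : 1 ≤ θ) (hσ : 0 ≤ σ)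
    (N : (Fin m → ℝ) → ℝ) (hN : IsNorm N)
    (Y : Matrix (Fin m) (Fin n) ℝ) (v : Fin m → ℝ)
    (hcert : VSGCert A Pplus s ξ θ ρ σ N Y v)
    (hΨ : ∀ J : Finset (Fin n), J.card ≤ s →
      ((J ∩ Pplus).card : ℝ) * (1 + θ * ξ) + ((J ∩ Pplusᶜ).card : ℝ) * (1 + ξ) ≤ Ψ) :
    SGbCond A Pplus s ξ θ (ρ + σ * Ψ) N := by
  obtain ⟨hc1, hc2, hc3, hc4, hc5⟩ := hcert
  intro x J hJ
  have hθξ : 0 ≤ θ * ξ := mul_nonneg (by linarith) hξ0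
  set C : Matrix (Fin n) (Fin n) ℝ := 1 - Y.transpose * A with hC
  set w : Fin m → ℝ := A.mulVec x with hw
  have hNw : 0 ≤ N w := isnormNonneg hN w
  set ε : Fin n → ℝ := fun i => if i ∈ J then
      (if i ∈ Pplus then (if 0 ≤ x i then 1 + θ*ξ else 1 - ξ)
       else (if 0 ≤ x i then 1 + ξ else -(1+ξ))) else 0 with hε
  have hsupp : ∀ i ∉ J, ε i = 0 := fun i hi => by simp [hε, hi]
  have hPbd : ∀ i ∈ Pplus, 0 ≤ ε i ∧ ε i ≤ 1 + θ * ξ := by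
    intro i hi
    rw [hε]
    by_cases hiJ : i ∈ J
    · simp only [hiJ, if_true, hi]
      by_cases hx : 0 ≤ x i
      · simp only [hx, if_true]; constructor <;> linarith
      · simp only [hx, if_false]; constructor <;> linarith
    · simp only [hiJ, if_false]; constructor <;> linarith
  have hPnbd : ∀ i ∉ Pplus, |ε i| ≤ 1 + ξ := by
    intro i hi
    rw [hε]
    by_cases hiJ : i ∈ J
    · simp only [hiJ, if_true, hi, if_false]
      by_cases hx : 0 ≤ x i
      · simp only [hx, if_true]; rw [abs_of_nonneg (by linarith)]
      · simp only [hx, if_false]; rw [abs_of_nonpos (by linarith)]; linarith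
    · simp only [hiJ, if_false, abs_zero]; linarith
  have hpsi : ∀ i ∈ J ∩ Pplus, ε i * x i = x i + ξ * max (-x i) (θ * x i) := by
    intro i hi
    rw [Finset.mem_inter] at hi
    rw [hε]
    simp only [hi.1, if_true, hi.2]
    by_cases hx : 0 ≤ x i
    · rw [if_pos hx, max_eq_right (by nlinarith : -x i ≤ θ * x i)]; ring
    · push_neg at hx
      rw [if_neg (not_le.mpr hx), max_eq_left (by nlinarith : θ * x i ≤ -x i)]; ring
  have habsn : ∀ i ∈ J ∩ Pplusᶜ, ε i * x i = |x i| + ξ * |x i| := by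
    intro i hi
    rw [Finset.mem_inter, Finset.mem_compl] at hi
    rw [hε]
    simp only [hi.1, if_true, hi.2, if_false]
    by_cases hx : 0 ≤ x i
    · rw [if_pos hx, abs_of_nonneg hx]; ring
    · push_neg at hx
      rw [if_neg (not_le.mpr hx), abs_of_neg hx]; ring
  have hJsplit : ∀ f : Fin n → ℝ, ∑ i ∈ J, f i = ∑ i ∈ J ∩ Pplus, f i + ∑ i ∈ J ∩ Pplusᶜ, f i := by
    intro f
    have hJP : J \ Pplus = J ∩ Pplusᶜ := by
      ext i; simp [Finset.mem_sdiff, Finset.mem_compl, Finset.mem_inter]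
    rw [← Finset.sum_inter_add_sum_sdiff J Pplus f, hJP]
  have E1 : ∑ i, ε i * x i =
      (∑ i ∈ J ∩ Pplus, x i + ∑ i ∈ J ∩ Pplusᶜ, |x i|)
      + (ξ * ∑ i ∈ J ∩ Pplus, max (-x i) (θ * x i) + ξ * ∑ i ∈ J ∩ Pplusᶜ, |x i|) := by
    rw [← Finset.sum_subset (Finset.subset_univ J) (fun i _ hi => by rw [hsupp i hi, zero_mul]),
      hJsplit (fun i => ε i * x i), Finset.sum_congr rfl hpsi, Finset.sum_congr rfl habsn,
      Finset.sum_add_distrib, Finset.sum_add_distrib, ← Finset.mul_sum, ← Finset.mul_sum]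
    ring
  set D : Fin n → ℝ := fun j => ∑ i, ε i * C i j with hDdef
  have hYe : ∀ k, (Y.mulVec ε) k = ∑ i, Y k i * ε i := by
    intro k; simp [Matrix.mulVec, dotProduct]
  have hD : ∀ j : Fin n, D j = ε j - ∑ k, (Y.mulVec ε) k * A k j := by
    intro j
    have h1 : ∀ i, ε i * C i j = (if i = j then ε i else 0) - ∑ k, Y k i * ε i * A k j := by
      intro i
      rw [hC]
      simp only [Matrix.sub_apply, Matrix.one_apply, Matrix.mul_apply, Matrix.transpose_apply]
      rw [mul_sub, Finset.mul_sum]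
      congr 1
      · split_ifs <;> simp
      · exact Finset.sum_congr rfl fun k _ => by ring
    rw [hDdef]
    simp only []
    rw [Finset.sum_congr rfl (fun i _ => h1 i), Finset.sum_sub_distrib,
      Finset.sum_ite_eq' Finset.univ j ε]
    simp only [Finset.mem_univ, if_true]
    congr 1
    rw [Finset.sum_comm]
    refine Finset.sum_congr rfl fun k _ => ?_
    rw [hYe k, Finset.sum_mul]
  have I1 : ∑ j, D j * x j = ∑ i, ε i * x i - ∑ k, (Y.mulVec ε) k * w k := by
    have hterm : ∀ j, D j * x j = ε j * x j - ∑ k, (Y.mulVec ε) k * (A k j * x j) := by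
      intro j; rw [hD j, sub_mul, Finset.sum_mul]
      congr 1
      exact Finset.sum_congr rfl fun k _ => by ring
    rw [Finset.sum_congr rfl (fun j _ => hterm j), Finset.sum_sub_distrib]
    congr 1
    rw [Finset.sum_comm]
    refine Finset.sum_congr rfl fun k _ => ?_
    rw [← Finset.mul_sum, hw]
    simp [Matrix.mulVec, dotProduct, Finset.mul_sum]
  have I2 : ∑ j, (A.transpose.mulVec v) j * x j = ∑ k, v k * w k := by
    rw [hw]
    simp only [Matrix.mulVec, dotProduct, Matrix.transpose_apply, Finset.sum_mul,
      Finset.mul_sum]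
    rw [Finset.sum_comm]
    exact Finset.sum_congr rfl fun k _ => Finset.sum_congr rfl fun j _ => by ring
  have hsub : ∑ j, (D j - (A.transpose.mulVec v) j) * x j
      = ∑ j, D j * x j - ∑ j, (A.transpose.mulVec v) j * x j := by
    rw [← Finset.sum_sub_distrib]; exact Finset.sum_congr rfl fun j _ => by ring
  -- B2
  have B2 : ∑ k, v k * w k ≤ ρ * N w :=
    (pairing_le hN v w).trans (mul_le_mul_of_nonneg_right hc5 hNw)
  -- B1
  have hswap : ∑ k, (Y.mulVec ε) k * w k = ∑ i, ε i * (∑ k, Y k i * w k) := by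
    simp only [Matrix.mulVec, dotProduct, Finset.sum_mul, Finset.mul_sum]
    rw [Finset.sum_comm]
    exact Finset.sum_congr rfl fun i _ => Finset.sum_congr rfl fun k _ => by ring
  have hcol : ∀ i, ε i * (∑ k, Y k i * w k) ≤ |ε i| * (σ * N w) := by
    intro i
    have hp : ∑ k, Y k i * w k ≤ σ * N w :=
      (pairing_le hN (fun k => Y k i) w).trans (mul_le_mul_of_nonneg_right (hc4 i) hNw)
    have hq : -(∑ k, Y k i * w k) ≤ σ * N w := by
      have h2 := (pairing_le hN (fun k => Y k i) (-w)).trans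
        (mul_le_mul_of_nonneg_right (hc4 i) (isnormNonneg hN (-w)))
      rw [isnormNeg hN] at h2
      calc -(∑ k, Y k i * w k) = ∑ k, Y k i * (-w) k := by
            rw [← Finset.sum_neg_distrib]
            exact Finset.sum_congr rfl fun k _ => by simp
        _ ≤ σ * N w := h2
    by_cases he : 0 ≤ ε i
    · rw [abs_of_nonneg he]
      exact mul_le_mul_of_nonneg_left hp he
    · push_neg at he
      rw [abs_of_neg he]
      nlinarith
  have habs_sum : ∑ i, |ε i| ≤
      ((J ∩ Pplus).card : ℝ) * (1 + θ * ξ) + ((J ∩ Pplusᶜ).card : ℝ) * (1 + ξ) := by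
    rw [← Finset.sum_subset (Finset.subset_univ J) (fun i _ hi => by rw [hsupp i hi, abs_zero]),
      hJsplit (fun i => |ε i|)]
    have hb1 : ∑ i ∈ J ∩ Pplus, |ε i| ≤ ((J ∩ Pplus).card : ℝ) * (1 + θ * ξ) := by
      rw [Finset.card_eq_sum_ones, Nat.cast_sum, Finset.sum_mul]
      refine Finset.sum_le_sum fun i hi => ?_
      have hip : i ∈ Pplus := (Finset.mem_inter.mp hi).2
      rw [Nat.cast_one, one_mul, abs_of_nonneg (hPbd i hip).1]
      exact (hPbd i hip).2
    have hb2 : ∑ i ∈ J ∩ Pplusᶜ, |ε i| ≤ ((J ∩ Pplusᶜ).card : ℝ) * (1 + ξ) := by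
      rw [Finset.card_eq_sum_ones, Nat.cast_sum, Finset.sum_mul]
      refine Finset.sum_le_sum fun i hi => ?_
      have hip : i ∉ Pplus := Finset.mem_compl.mp (Finset.mem_inter.mp hi).2
      rw [Nat.cast_one, one_mul]
      exact hPnbd i hip
    linarith
  have B1 : ∑ k, (Y.mulVec ε) k * w k ≤ σ * Ψ * N w := by
    rw [hswap]
    calc ∑ i, ε i * (∑ k, Y k i * w k) ≤ ∑ i, |ε i| * (σ * N w) :=
          Finset.sum_le_sum fun i _ => hcol i
      _ = (∑ i, |ε i|) * (σ * N w) := by rw [Finset.sum_mul]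
      _ ≤ Ψ * (σ * N w) :=
          mul_le_mul_of_nonneg_right ((habs_sum).trans (hΨ J hJ)) (by positivity)
      _ = σ * Ψ * N w := by ring
  -- B3
  have hB3 : ∀ j, (D j - (A.transpose.mulVec v) j) * x j ≤
      ξ * (if j ∈ Pplus then max (-x j) (θ * x j) else |x j|) := by
    intro j
    have hDP : D j ≤ Phi Pplus s ξ θ (fun i => C i j) :=
      eps_dot_le_phi Pplus s ξ θ hξ0 hθ J hJ ε (fun i => C i j) hsupp hPbd hPnbd
    have hDN : -D j ≤ Phi Pplus s ξ θ (fun i => -(C i j)) := by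
      have h2 := eps_dot_le_phi Pplus s ξ θ hξ0 hθ J hJ ε (fun i => -(C i j)) hsupp hPbd hPnbd
      have h3 : -D j = ∑ i, ε i * (-(C i j)) := by
        rw [hDdef]
        simp only []
        rw [← Finset.sum_neg_distrib]
        exact Finset.sum_congr rfl fun i _ => by ring
      rw [h3]; exact h2
    have h1 := hc1 j
    by_cases hj : j ∈ Pplus
    · rw [if_pos hj]
      have h3 := hc3 j hj
      by_cases hx : 0 ≤ x j
      · rw [max_eq_right (by nlinarith : -x j ≤ θ * x j)]
        have hle : D j - (A.transpose.mulVec v) j ≤ θ * ξ := by linarith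
        calc (D j - (A.transpose.mulVec v) j) * x j ≤ (θ * ξ) * x j :=
              mul_le_mul_of_nonneg_right hle hx
          _ = ξ * (θ * x j) := by ring
      · push_neg at hx
        rw [max_eq_left (by nlinarith : θ * x j ≤ -x j)]
        have hle : -(D j - (A.transpose.mulVec v) j) ≤ ξ := by linarith
        calc (D j - (A.transpose.mulVec v) j) * x j
            = (-(D j - (A.transpose.mulVec v) j)) * (-x j) := by ring
          _ ≤ ξ * (-x j) := mul_le_mul_of_nonneg_right hle (by linarith)
    · rw [if_neg hj]
      have h2 := hc2 j hj
      by_cases hx : 0 ≤ x j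
      · rw [abs_of_nonneg hx]
        have hle : D j - (A.transpose.mulVec v) j ≤ ξ := by linarith
        exact mul_le_mul_of_nonneg_right hle hx
      · push_neg at hx
        rw [abs_of_neg hx]
        have hle : -(D j - (A.transpose.mulVec v) j) ≤ ξ := by linarith
        calc (D j - (A.transpose.mulVec v) j) * x j
            = (-(D j - (A.transpose.mulVec v) j)) * (-x j) := by ring
          _ ≤ ξ * (-x j) := mul_le_mul_of_nonneg_right hle (by linarith)
  have hsplitP : Finset.univ.filter (fun j : Fin n => j ∈ Pplus) = Pplus := by
    ext i; simp
  have hsplitPc : Finset.univ.filter (fun j : Fin n => ¬ j ∈ Pplus) = Pplusᶜ := by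
    ext i; simp
  have B3 : ∑ j, (D j - (A.transpose.mulVec v) j) * x j ≤
      ξ * ∑ j ∈ Pplus, max (-x j) (θ * x j) + ξ * ∑ j ∈ Pplusᶜ, |x j| := by
    calc ∑ j, (D j - (A.transpose.mulVec v) j) * x j
        ≤ ∑ j, ξ * (if j ∈ Pplus then max (-x j) (θ * x j) else |x j|) :=
          Finset.sum_le_sum fun j _ => hB3 j
      _ = ξ * ∑ j ∈ Pplus, max (-x j) (θ * x j) + ξ * ∑ j ∈ Pplusᶜ, |x j| := by
          rw [← Finset.sum_filter_add_sum_filter_not Finset.univ (fun j => j ∈ Pplus)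
            (fun j => ξ * (if j ∈ Pplus then max (-x j) (θ * x j) else |x j|)),
            hsplitP, hsplitPc, ← Finset.mul_sum, ← Finset.mul_sum]
          congr 1
          · congr 1
            refine Finset.sum_congr rfl fun j hj => ?_
            rw [if_pos hj]
          · congr 1
            refine Finset.sum_congr rfl fun j hj => ?_
            rw [if_neg (Finset.mem_compl.mp hj)]
  -- splits
  have hsp1 : ∑ j ∈ Pplus, max (-x j) (θ * x j)
      = ∑ i ∈ J ∩ Pplus, max (-x i) (θ * x i) + ∑ i ∈ Pplus \ J, max (-x i) (θ * x i) := by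
    rw [← Finset.sum_inter_add_sum_sdiff Pplus J (fun i => max (-x i) (θ * x i)),
      Finset.inter_comm]
  have hsp2 : ∑ j ∈ Pplusᶜ, |x j|
      = ∑ i ∈ J ∩ Pplusᶜ, |x i| + ∑ i ∈ Pplusᶜ \ J, |x i| := by
    rw [← Finset.sum_inter_add_sum_sdiff Pplusᶜ J (fun i => |x i|), Finset.inter_comm]
  have hq1 : ξ * ∑ j ∈ Pplus, max (-x j) (θ * x j)
      = ξ * ∑ i ∈ J ∩ Pplus, max (-x i) (θ * x i) + ξ * ∑ i ∈ Pplus \ J, max (-x i) (θ * x i) := by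
    rw [hsp1]; ring
  have hq2 : ξ * ∑ j ∈ Pplusᶜ, |x j|
      = ξ * ∑ i ∈ J ∩ Pplusᶜ, |x i| + ξ * ∑ i ∈ Pplusᶜ \ J, |x i| := by
    rw [hsp2]; ring
  have hgoal : (ρ + σ * Ψ) * N w = ρ * N w + σ * Ψ * N w := by ring
  have hrhs : ξ * (∑ i ∈ Pplusᶜ \ J, |x i| + ∑ i ∈ Pplus \ J, max (-x i) (θ * x i))
      = ξ * ∑ i ∈ Pplusᶜ \ J, |x i| + ξ * ∑ i ∈ Pplus \ J, max (-x i) (θ * x i) := by ring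
  rw [hrhs, hgoal]
  linarith [E1, I1, I2, hsub, B1, B2, B3]

set_option maxHeartbeats 2000000 in
theorem stmt7 {m n : ℕ} (A : Matrix (Fin m) (Fin n) ℝ) (Pplus : Finset (Fin n))
    (s : ℕ) (hs : 1 ≤ s) (ξ θ ρ σ : ℝ)
    (hξ0 : 0 ≤ ξ) (hξ1 : ξ < 1) (hθ : 1 ≤ θ) (hρ : 0 ≤ ρ) (hσ : 0 ≤ σ)
    (N : (Fin m → ℝ) → ℝ) (hN : IsNorm N)
    (h : VSG A Pplus s ξ θ ρ σ N) :
    let β : ℝ := ρ + σ *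
      (((Finset.range (Pplus.card + 1) ×ˢ
          Finset.range ((Pplusᶜ : Finset (Fin n)).card + 1)).filter
            (fun p => p.1 + p.2 ≤ s)).sup' ⟨(0, 0), by simp⟩
        (fun p => (p.1 : ℝ) * (1 + θ * ξ) + (p.2 : ℝ) * (1 + ξ)))
    SGbCond A Pplus s ξ θ β N ∧ β ≤ ρ + σ * s * (1 + θ * ξ) ∧ SemiGood A Pplus s := by
  obtain ⟨Y, v, hcert⟩ := h
  set Ψ : ℝ := (((Finset.range (Pplus.card + 1) ×ˢ
      Finset.range ((Pplusᶜ : Finset (Fin n)).card + 1)).filter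
        (fun p => p.1 + p.2 ≤ s)).sup' ⟨(0, 0), by simp⟩
    (fun p => (p.1 : ℝ) * (1 + θ * ξ) + (p.2 : ℝ) * (1 + ξ))) with hΨdef
  intro β
  have hβ : β = ρ + σ * Ψ := rfl
  have hθξ : 0 ≤ θ * ξ := mul_nonneg (by linarith) hξ0
  have hΨprop : ∀ J : Finset (Fin n), J.card ≤ s →
      ((J ∩ Pplus).card : ℝ) * (1 + θ * ξ) + ((J ∩ Pplusᶜ).card : ℝ) * (1 + ξ) ≤ Ψ := by
    intro J hJ
    have hcards : (J ∩ Pplus).card + (J ∩ Pplusᶜ).card = J.card := by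
      have h2 : J ∩ Pplusᶜ = J \ Pplus := by
        ext i; simp [Finset.mem_sdiff, Finset.mem_compl, Finset.mem_inter]
      rw [h2]; exact Finset.card_inter_add_card_sdiff J Pplus
    have hmem : (((J ∩ Pplus).card, (J ∩ Pplusᶜ).card) : ℕ × ℕ) ∈
        ((Finset.range (Pplus.card + 1) ×ˢ
          Finset.range ((Pplusᶜ : Finset (Fin n)).card + 1)).filter
            (fun p => p.1 + p.2 ≤ s)) := by
      refine Finset.mem_filter.mpr ⟨Finset.mem_product.mpr ⟨?_, ?_⟩, ?_⟩
      · exact Finset.mem_range.mpr (Nat.lt_succ_of_le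
          (Finset.card_le_card Finset.inter_subset_right))
      · exact Finset.mem_range.mpr (Nat.lt_succ_of_le
          (Finset.card_le_card Finset.inter_subset_right))
      · show (J ∩ Pplus).card + (J ∩ Pplusᶜ).card ≤ s
        omega
    have hle := Finset.le_sup'
      (fun p : ℕ × ℕ => (p.1 : ℝ) * (1 + θ * ξ) + (p.2 : ℝ) * (1 + ξ)) hmem
    rw [← hΨdef] at hle
    simpa using hle
  have hsgb : SGbCond A Pplus s ξ θ (ρ + σ * Ψ) N :=
    main_sgb A Pplus s ξ θ ρ σ Ψ hξ0 hξ1 hθ hσ N hN Y v hcert hΨprop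
  have hΨle : Ψ ≤ (s : ℝ) * (1 + θ * ξ) := by
    rw [hΨdef]
    apply Finset.sup'_le
    intro p hp
    obtain ⟨hmem, hsum⟩ := Finset.mem_filter.mp hp
    have h1 : (p.1 : ℝ) + (p.2 : ℝ) ≤ (s : ℝ) := by exact_mod_cast hsum
    have h2 : (p.2 : ℝ) * (1 + ξ) ≤ (p.2 : ℝ) * (1 + θ * ξ) := by
      apply mul_le_mul_of_nonneg_left _ (Nat.cast_nonneg _)
      nlinarith
    nlinarith [(Nat.cast_nonneg p.1 : (0:ℝ) ≤ (p.1 : ℝ)), (Nat.cast_nonneg p.2 : (0:ℝ) ≤ (p.2 : ℝ))]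
  clear_value β Ψ
  have hsg : SGCond A Pplus s ξ θ := by
    intro x hAx J hJ
    have h := hsgb x J hJ
    rw [hAx, isnormZero hN, mul_zero, zero_add] at h
    exact h
  refine ⟨by rw [hβ]; exact hsgb, ?_, ?_⟩
  · -- β ≤ ρ + σ * s * (1 + θ * ξ)
    rw [hβ]
    nlinarith [mul_le_mul_of_nonneg_left hΨle hσ]
  · -- SemiGood
    intro w hwcard hwpos z hAz hzpos hz1
    set J : Finset (Fin n) := Finset.univ.filter (fun i => w i ≠ 0) with hJdef
    set x : Fin n → ℝ := w - z with hx
    clear_value x J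
    have hxval : ∀ i, x i = w i - z i := fun i => by rw [hx]; rfl
    have hAx : A.mulVec x = 0 := by
      rw [hx, Matrix.mulVec_sub, hAz, sub_self]
    have hzero : ∀ i ∉ J, w i = 0 := by
      intro i hi
      rw [hJdef] at hi
      simpa using hi
    have hJsplit2 : ∀ f : Fin n → ℝ,
        ∑ i ∈ J, f i = ∑ i ∈ J ∩ Pplus, f i + ∑ i ∈ J ∩ Pplusᶜ, f i := by
      intro f
      have hJP : J \ Pplus = J ∩ Pplusᶜ := by
        ext i; simp [Finset.mem_sdiff, Finset.mem_compl, Finset.mem_inter]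
      rw [← Finset.sum_inter_add_sum_sdiff J Pplus f, hJP]
    have hsplitC : ∀ f : Fin n → ℝ,
        ∑ i ∈ Pplusᶜ \ J, f i + ∑ i ∈ Pplus \ J, f i = ∑ i ∈ Jᶜ, f i := by
      intro f
      have h1 : Pplusᶜ \ J = Jᶜ ∩ Pplusᶜ := by
        ext i; simp [Finset.mem_sdiff, Finset.mem_compl, Finset.mem_inter]; tauto
      have h2 : Pplus \ J = Jᶜ \ Pplusᶜ := by
        ext i; simp [Finset.mem_sdiff, Finset.mem_compl]; tauto
      rw [h1, h2, Finset.sum_inter_add_sum_sdiff]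
    have hRHS : ∑ i ∈ Pplusᶜ \ J, |x i| + ∑ i ∈ Pplus \ J, max (-x i) (θ * x i)
        = ∑ i ∈ Pplusᶜ \ J, |x i| + ∑ i ∈ Pplus \ J, |x i| := by
      congr 1
      refine Finset.sum_congr rfl fun i hi => ?_
      obtain ⟨hiP, hiJ⟩ := Finset.mem_sdiff.mp hi
      have hwi : w i = 0 := hzero i hiJ
      have hzi : 0 ≤ z i := hzpos i hiP
      have hxi : x i = -z i := by rw [hxval i, hwi]; ring
      rw [hxi, max_eq_left (by nlinarith : θ * (-z i) ≤ -(-z i)), abs_neg,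
        abs_of_nonneg hzi, neg_neg]
    have hstep1 : ∑ i ∈ J ∩ Pplus, x i + ∑ i ∈ J ∩ Pplusᶜ, |x i| ≤ ξ * ∑ i ∈ Jᶜ, |x i| := by
      have h := hsg x hAx J hwcard
      rw [hRHS, hsplitC (fun i => |x i|)] at h
      exact h
    have hsum_z : ∑ i ∈ Jᶜ, |x i| = ∑ i ∈ Jᶜ, |z i| := by
      refine Finset.sum_congr rfl fun i hi => ?_
      rw [hxval i, hzero i (Finset.mem_compl.mp hi)]
      simp
    have hsplitU : ∀ f : Fin n → ℝ, ∑ i, f i = ∑ i ∈ J, f i + ∑ i ∈ Jᶜ, f i := by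
      intro f
      rw [Finset.compl_eq_univ_sdiff, ← Finset.sum_inter_add_sum_sdiff Finset.univ J f,
        Finset.univ_inter]
    have hw_off : ∑ i ∈ Jᶜ, |w i| = 0 :=
      Finset.sum_eq_zero fun i hi => by rw [hzero i (Finset.mem_compl.mp hi), abs_zero]
    have hkey : ∑ i ∈ Jᶜ, |x i| ≤ ∑ i ∈ J, |w i| - ∑ i ∈ J, |z i| := by
      have h1 := hz1
      rw [hsplitU (fun i => |z i|), hsplitU (fun i => |w i|)] at h1
      rw [hsum_z]
      linarith
    have hJ2 : ∑ i ∈ J, |w i| - ∑ i ∈ J, |z i|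
        ≤ ∑ i ∈ J ∩ Pplus, x i + ∑ i ∈ J ∩ Pplusᶜ, |x i| := by
      rw [hJsplit2 (fun i => |w i|), hJsplit2 (fun i => |z i|)]
      have hA : ∑ i ∈ J ∩ Pplus, |w i| - ∑ i ∈ J ∩ Pplus, |z i| ≤ ∑ i ∈ J ∩ Pplus, x i := by
        rw [← Finset.sum_sub_distrib]
        refine Finset.sum_le_sum fun i hi => ?_
        have hiP : i ∈ Pplus := (Finset.mem_inter.mp hi).2
        rw [abs_of_nonneg (hwpos i hiP), abs_of_nonneg (hzpos i hiP), hxval i]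
      have hB : ∑ i ∈ J ∩ Pplusᶜ, |w i| - ∑ i ∈ J ∩ Pplusᶜ, |z i|
          ≤ ∑ i ∈ J ∩ Pplusᶜ, |x i| := by
        rw [← Finset.sum_sub_distrib]
        refine Finset.sum_le_sum fun i hi => ?_
        rw [hxval i]
        exact abs_sub_abs_le_abs_sub _ _
      linarith
    have hCnn : 0 ≤ ∑ i ∈ Jᶜ, |x i| := Finset.sum_nonneg fun i _ => abs_nonneg _
    have hC0 : ∑ i ∈ Jᶜ, |x i| = 0 := by nlinarith
    have hxoff : ∀ i ∉ J, x i = 0 := by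
      intro i hi
      have := (Finset.sum_eq_zero_iff_of_nonneg (fun i _ => abs_nonneg (x i))).mp hC0 i
        (Finset.mem_compl.mpr hi)
      exact abs_eq_zero.mp this
    have hRHS0 : ∀ y : Fin n → ℝ, (∀ i ∉ J, y i = 0) →
        ξ * (∑ i ∈ Pplusᶜ \ J, |y i| + ∑ i ∈ Pplus \ J, max (-y i) (θ * y i)) = 0 := by
      intro y hy
      have e1 : ∑ i ∈ Pplusᶜ \ J, |y i| = 0 := Finset.sum_eq_zero fun i hi => by
        rw [hy i (Finset.mem_sdiff.mp hi).2, abs_zero]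
      have e2 : ∑ i ∈ Pplus \ J, max (-y i) (θ * y i) = 0 := Finset.sum_eq_zero fun i hi => by
        rw [hy i (Finset.mem_sdiff.mp hi).2]; simp
      rw [e1, e2]; ring
    have hpos1 : ∑ i ∈ J ∩ Pplus, x i + ∑ i ∈ J ∩ Pplusᶜ, |x i| ≤ 0 := by
      have h := hsg x hAx J hwcard
      rw [hRHS0 x hxoff] at h
      exact h
    have hAnegx : A.mulVec (-x) = 0 := by rw [Matrix.mulVec_neg, hAx, neg_zero]
    have hneg1 : -∑ i ∈ J ∩ Pplus, x i + ∑ i ∈ J ∩ Pplusᶜ, |x i| ≤ 0 := by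
      have h := hsg (-x) hAnegx J hwcard
      rw [hRHS0 (-x) (fun i hi => by simp [hxoff i hi])] at h
      have e1 : ∑ i ∈ J ∩ Pplus, (-x) i = -∑ i ∈ J ∩ Pplus, x i := by simp
      have e2 : ∑ i ∈ J ∩ Pplusᶜ, |(-x) i| = ∑ i ∈ J ∩ Pplusᶜ, |x i| := by
        refine Finset.sum_congr rfl fun i _ => ?_
        simp
      rw [e1, e2] at h
      exact h
    have habsnn : 0 ≤ ∑ i ∈ J ∩ Pplusᶜ, |x i| := Finset.sum_nonneg fun i _ => abs_nonneg _
    have habs0 : ∑ i ∈ J ∩ Pplusᶜ, |x i| = 0 := by linarith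
    have hxJPn : ∀ i ∈ J ∩ Pplusᶜ, x i = 0 := by
      intro i hi
      have h5 := (Finset.sum_eq_zero_iff_of_nonneg
        (f := fun i => |x i|) (s := J ∩ Pplusᶜ) (fun i _ => abs_nonneg (x i))).mp habs0 i hi
      exact abs_eq_zero.mp h5
    have hsumP : ∑ i ∈ J ∩ Pplus, x i = 0 := le_antisymm (by linarith) (by linarith)
    have hxPge : ∀ i₀ ∈ J ∩ Pplus, 0 ≤ x i₀ := by
      intro i₀ hi₀
      obtain ⟨hiJ, hiP⟩ := Finset.mem_inter.mp hi₀
      by_contra hneg2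
      push_neg at hneg2
      have hJ' : (J.erase i₀).card ≤ s :=
        le_trans (Finset.card_le_card (Finset.erase_subset _ _)) hwcard
      have h := hsg x hAx (J.erase i₀) hJ'
      have e1 : (J.erase i₀) ∩ Pplus = (J ∩ Pplus).erase i₀ := by
        ext i; simp only [Finset.mem_erase, Finset.mem_inter]; tauto
      have e2 : ∑ i ∈ (J.erase i₀) ∩ Pplusᶜ, |x i| = 0 := by
        refine Finset.sum_eq_zero fun i hi => ?_
        obtain ⟨hie, hiPc⟩ := Finset.mem_inter.mp hi
        rw [hxJPn i (Finset.mem_inter.mpr ⟨Finset.mem_of_mem_erase hie, hiPc⟩), abs_zero]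
      have e3 : ∑ i ∈ (J ∩ Pplus).erase i₀, x i = -x i₀ := by
        have h4 := Finset.sum_erase_add (J ∩ Pplus) x hi₀
        linarith
      have eR : ∑ i ∈ Pplusᶜ \ (J.erase i₀), |x i| = 0 := by
        refine Finset.sum_eq_zero fun i hi => ?_
        obtain ⟨hiPc, hiJe⟩ := Finset.mem_sdiff.mp hi
        by_cases hiJ2 : i ∈ J
        · rw [hxJPn i (Finset.mem_inter.mpr ⟨hiJ2, hiPc⟩), abs_zero]
        · rw [hxoff i hiJ2, abs_zero]
      have eR2 : ∑ i ∈ Pplus \ (J.erase i₀), max (-x i) (θ * x i)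
          = max (-x i₀) (θ * x i₀) := by
        refine Finset.sum_eq_single_of_mem i₀ ?_ ?_
        · refine Finset.mem_sdiff.mpr ⟨hiP, ?_⟩
          simp [Finset.mem_erase]
        · intro i hi hne
          obtain ⟨hiP2, hiJe⟩ := Finset.mem_sdiff.mp hi
          have hxi : x i = 0 := by
            by_cases hiJ2 : i ∈ J
            · exact absurd (Finset.mem_erase.mpr ⟨hne, hiJ2⟩) hiJe
            · exact hxoff i hiJ2
          rw [hxi]; simp
      rw [e1, e2, e3, eR, eR2, add_zero, zero_add] at h
      have hmax : max (-x i₀) (θ * x i₀) = -x i₀ :=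
        max_eq_left (by nlinarith : θ * x i₀ ≤ -x i₀)
      rw [hmax] at h
      nlinarith
    have hxJ : ∀ i ∈ J, x i = 0 := by
      intro i hi
      by_cases hiP : i ∈ Pplus
      · exact (Finset.sum_eq_zero_iff_of_nonneg hxPge).mp hsumP i
          (Finset.mem_inter.mpr ⟨hi, hiP⟩)
      · exact hxJPn i (Finset.mem_inter.mpr ⟨hi, Finset.mem_compl.mpr hiP⟩)
    funext i
    have hxi : x i = 0 := by
      by_cases hi : i ∈ J
      · exact hxJ i hi
      · exact hxoff i hi
    rw [hxval i] at hxi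
    linarith
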